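/- The assignment j(Σ_{w∈W} r_w T_w) = Σ_{w∈W} r_w (−q)^{ℓ(w)} (T_{w⁻¹})⁻¹ is a well-defined involutive endomorphism of the Hecke algebra H regarded as an R-algebra (it is R-linear, multiplicative, and j∘j = id). -/

import Mathlib

namespace KLPaper

open Polynomial
open scoped Classical

variable {B : Type*} {W : Type*} [Group W] {M : CoxeterMatrix B}

/-- The Bruhat order on a Coxeter group: generated by right multiplication by
reflections which increases the length. -/
def bruhatLE (cs : CoxeterSystem M W) : W → W → Prop :=
  Relation.ReflTransGen (fun x y =>
    (∃ t, cs.IsReflection t ∧ y = x * t) ∧ cs.length x < cs.length y)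

/-- A commutative ring `R` containing `ℤ[q,q⁻¹]`, with a direct sum decomposition
`R = ⊕_{k ∈ ℤ} R_k` into additive subgroups and an involutive ring endomorphism `conj`
such that `R_i R_j ⊆ R_{i+j}`, `conj R_i = R_{-i}`, `1 ∈ R_0`, `q ∈ R_2`, `conj q = q⁻¹`. -/
structure KLRing (R : Type*) [CommRing R] where
  q : R
  qinv : R
  q_qinv : q * qinv = 1
  grade : ℤ → AddSubgroup R
  decomp : DirectSum.IsInternal grade
  conj : R →+* R
  conj_conj : ∀ r : R, conj (conj r) = r
  grade_mul : ∀ (i j : ℤ) (r s : R), r ∈ grade i → s ∈ grade j → r * s ∈ grade (i + j)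
  conj_grade : ∀ (i : ℤ) (r : R), r ∈ grade i → conj r ∈ grade (-i)
  one_mem : (1 : R) ∈ grade 0
  q_mem : q ∈ grade 2
  conj_q : conj q = qinv
  laurent_inj : Function.Injective fun f : ℤ →₀ ℤ =>
    f.sum fun k c => c • (if 0 ≤ k then q ^ k.toNat else qinv ^ (-k).toNat)

variable {R : Type*} [CommRing R]

/-- The subgroup `R_0 + R_1 + ⋯ + R_{n-1} = ⊕_{i=0}^{n-1} R_i` of `R`. -/
def KLRing.gradeSum (K : KLRing R) (n : ℕ) : AddSubgroup R :=
  ⨆ i ∈ Finset.range n, K.grade (i : ℤ)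

/-- `r` belongs to `ℤ[q] ⊆ R`. -/
def KLRing.InZq (K : KLRing R) (r : R) : Prop :=
  ∃ p : Polynomial ℤ, Polynomial.aeval K.q p = r

/-- The Hecke algebra of `(W, S)` over `R`: the free `R`-module with basis
`{T_w}_{w ∈ W}`, with multiplication determined by `T_{w₁} T_{w₂} = T_{w₁ w₂}`
whenever `ℓ(w₁w₂) = ℓ(w₁) + ℓ(w₂)` and `(T_s + 1)(T_s - q) = 0` for `s ∈ S`. -/
structure Hecke (cs : CoxeterSystem M W) (R : Type*) [CommRing R] (q : R) where
  carrier : Type*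
  [ring : Ring carrier]
  [alg : Algebra R carrier]
  T : W → carrier
  basis : Module.Basis W R carrier
  basis_eq : ∀ w : W, basis w = T w
  T_mul : ∀ w₁ w₂ : W, cs.length (w₁ * w₂) = cs.length w₁ + cs.length w₂ →
    T w₁ * T w₂ = T (w₁ * w₂)
  T_quad : ∀ i : B, (T (cs.simple i) + 1) * (T (cs.simple i) - algebraMap R carrier q) = 0

attribute [instance] Hecke.ring Hecke.alg

variable {cs : CoxeterSystem M W}

/-- `bar` is the bar involution `Σ r_w T_w ↦ Σ conj(r_w) (T_{w⁻¹})⁻¹` of the Hecke algebra. -/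
def IsBar (K : KLRing R) (Hk : Hecke cs R K.q) (bar : Hk.carrier →+* Hk.carrier) : Prop :=
  ∀ (r : R) (w : W), bar (r • Hk.T w) = K.conj r • Ring.inverse (Hk.T w⁻¹)

/-- `j` is the involution `j(Σ r_w T_w) = Σ r_w (-q)^{ℓ(w)} (T_{w⁻¹})⁻¹` of the Hecke algebra. -/
def IsJ (K : KLRing R) (Hk : Hecke cs R K.q) (j : Hk.carrier →ₐ[R] Hk.carrier) : Prop :=
  ∀ w : W, j (Hk.T w) = (-K.q) ^ cs.length w • Ring.inverse (Hk.T w⁻¹)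

/-- `C` is the Kazhdan–Lusztig basis element `C_w`:
`C = Σ_{y ≤ w} P_{y,w} T_y` with `P_{w,w} = 1`,
`P_{y,w} ∈ ⊕_{i=0}^{ℓ(w)-ℓ(y)-1} R_i` for `y < w`, and `bar C = q^{-ℓ(w)} C`.
(The coefficient `P_{y,w}` of `C_w` is `Hk.basis.repr C y`.) -/
def IsKLElt (K : KLRing R) (Hk : Hecke cs R K.q)
    (bar : Hk.carrier →+* Hk.carrier) (w : W) (C : Hk.carrier) : Prop :=
  Hk.basis.repr C w = 1 ∧
  (∀ y : W, Hk.basis.repr C y ≠ 0 → bruhatLE cs y w) ∧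
  (∀ y : W, bruhatLE cs y w → y ≠ w →
    Hk.basis.repr C y ∈ K.gradeSum (cs.length w - cs.length y)) ∧
  bar C = K.qinv ^ cs.length w • C

/-- The standard parabolic subgroup `W_J = ⟨J⟩`. -/
def WJ (cs : CoxeterSystem M W) (J : Set B) : Subgroup W :=
  Subgroup.closure (cs.simple '' J)

/-- `W^J`: the set of minimal length coset representatives of `W/W_J`,
i.e. the `w ∈ W` with `ws > w` for all `s ∈ J`. -/
def minReps (cs : CoxeterSystem M W) (J : Set B) : Set W :=
  {w | ∀ i ∈ J, cs.length w < cs.length (w * cs.simple i)}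

/-- The Hecke algebra `H(W_J)` of the standard parabolic subgroup `W_J`
(with generating set `J`; the length function of `(W_J, J)` is the restriction
of that of `(W, S)`). -/
structure HeckeJ (cs : CoxeterSystem M W) (J : Set B) (R : Type*) [CommRing R] (q : R) where
  carrier : Type*
  [ring : Ring carrier]
  [alg : Algebra R carrier]
  T : WJ cs J → carrier
  basis : Module.Basis (WJ cs J) R carrier
  basis_eq : ∀ x, basis x = T x
  T_mul : ∀ x₁ x₂ : WJ cs J,
    cs.length ((x₁ : W) * (x₂ : W)) = cs.length (x₁ : W) + cs.length (x₂ : W) →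
    T x₁ * T x₂ = T (x₁ * x₂)
  T_quad : ∀ (i : B) (hi : i ∈ J),
    (T ⟨cs.simple i, Subgroup.subset_closure ⟨i, hi, rfl⟩⟩ + 1) *
      (T ⟨cs.simple i, Subgroup.subset_closure ⟨i, hi, rfl⟩⟩ - algebraMap R carrier q) = 0

attribute [instance] HeckeJ.ring HeckeJ.alg

/-- `(Mod, φ)` is (a realization of) the induced module `H^{J,a} = H ⊗_{H(W_J)} R^a`
together with `φ = φ^{J,a} : h ↦ h ⊗ 1^a`:  `φ` is surjective and its kernel is
the `R`-span of the elements `h (T_s - a)`, `s ∈ J`, which is exactly the kernel of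
`h ↦ h ⊗ 1^a`. -/
def IsInduced {q : R} (Hk : Hecke cs R q) (J : Set B) (a : R)
    (Mod : Type*) [AddCommGroup Mod] [Module R Mod] (φ : Hk.carrier →ₗ[R] Mod) : Prop :=
  Function.Surjective φ ∧
  LinearMap.ker φ = Submodule.span R
    {h : Hk.carrier | ∃ (g : Hk.carrier) (i : B), i ∈ J ∧
      h = g * (Hk.T (cs.simple i) - algebraMap R Hk.carrier a)}

/-- `C` is the parabolic Kazhdan–Lusztig basis element `C_w^{J,a}` of `H^{J,a}`:
`C = Σ_{y ∈ W^J, y ≤ w} P^{J,a}_{y,w} T_y^{J,a}` with `P^{J,a}_{w,w} = 1`,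
`P^{J,a}_{y,w} ∈ ⊕_{i=0}^{ℓ(w)-ℓ(y)-1} R_i` for `y < w`, and `barJ C = q^{-ℓ(w)} C`,
where `b` is the basis `(T_y^{J,a})_{y ∈ W^J}` of `H^{J,a}` and `barJ` its bar involution.
(The coefficient `P^{J,a}_{y,w}` of `C_w^{J,a}` is `b.repr C y`.) -/
def IsKLEltJ (K : KLRing R) {J : Set B} {Mod : Type*} [AddCommGroup Mod] [Module R Mod]
    (b : Module.Basis (minReps cs J) R Mod) (barJ : Mod →+ Mod)
    (w : minReps cs J) (C : Mod) : Prop :=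
  b.repr C w = 1 ∧
  (∀ y : minReps cs J, b.repr C y ≠ 0 → bruhatLE cs y.1 w.1) ∧
  (∀ y : minReps cs J, bruhatLE cs y.1 w.1 → y ≠ w →
    b.repr C y ∈ K.gradeSum (cs.length w.1 - cs.length y.1)) ∧
  barJ C = K.qinv ^ cs.length w.1 • C



section JConstruction

variable (K : KLRing R) (Hk : Hecke cs R K.q)

lemma T_one : Hk.T 1 = 1 := by
  have h : LinearMap.mulRight R (Hk.T 1) = LinearMap.id := by
    apply Hk.basis.ext
    intro w
    simp only [LinearMap.mulRight_apply, LinearMap.id_apply, Hk.basis_eq]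
    rw [Hk.T_mul w 1 (by simp), mul_one]
  have := LinearMap.congr_fun h 1
  simpa using this

lemma T_sq (i : B) : Hk.T (cs.simple i) * Hk.T (cs.simple i)
    = (K.q - 1) • Hk.T (cs.simple i) + K.q • 1 := by
  have h := Hk.T_quad i
  rw [Algebra.algebraMap_eq_smul_one] at h
  set t := Hk.T (cs.simple i)
  set c : Hk.carrier := K.q • 1 with hc
  have : t * t + t - t * c - c = 0 := by
    rw [← h]; noncomm_ring
  have h2 : t * c = K.q • t := by rw [hc, mul_smul_comm, mul_one]
  rw [h2] at this
  have h3 : t * t = K.q • t - t + c := by linear_combination (norm := noncomm_ring) this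
  rw [h3, hc]
  module

lemma Ts_inv_right (i : B) :
    Hk.T (cs.simple i) * (K.qinv • Hk.T (cs.simple i) + (K.qinv - 1) • 1) = 1 := by
  set t := Hk.T (cs.simple i)
  rw [mul_add, mul_smul_comm, mul_smul_comm, T_sq, mul_one]
  have hq : K.qinv * K.q = 1 := by rw [mul_comm]; exact K.q_qinv
  have h1 : K.qinv • ((K.q - 1) • t + K.q • (1 : Hk.carrier))
      = (K.qinv * (K.q - 1)) • t + (K.qinv * K.q) • 1 := by module
  rw [h1, hq]
  have h2 : K.qinv * (K.q - 1) = 1 - K.qinv := by linear_combination hq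
  rw [h2]
  module

lemma Ts_inv_left (i : B) :
    (K.qinv • Hk.T (cs.simple i) + (K.qinv - 1) • 1) * Hk.T (cs.simple i) = 1 := by
  set t := Hk.T (cs.simple i)
  rw [add_mul, smul_mul_assoc, smul_mul_assoc, T_sq, one_mul]
  have hq : K.qinv * K.q = 1 := by rw [mul_comm]; exact K.q_qinv
  have h1 : K.qinv • ((K.q - 1) • t + K.q • (1 : Hk.carrier))
      = (K.qinv * (K.q - 1)) • t + (K.qinv * K.q) • 1 := by module
  rw [h1, hq]
  have h2 : K.qinv * (K.q - 1) = 1 - K.qinv := by linear_combination hq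
  rw [h2]
  module

lemma isUnit_T_simple (i : B) : IsUnit (Hk.T (cs.simple i)) :=
  ⟨⟨Hk.T (cs.simple i), K.qinv • Hk.T (cs.simple i) + (K.qinv - 1) • 1,
    Ts_inv_right K Hk i, Ts_inv_left K Hk i⟩, rfl⟩

lemma inverse_T_simple (i : B) : Ring.inverse (Hk.T (cs.simple i))
    = K.qinv • Hk.T (cs.simple i) + (K.qinv - 1) • 1 :=
  Ring.inverse_unit ⟨Hk.T (cs.simple i), K.qinv • Hk.T (cs.simple i) + (K.qinv - 1) • 1,
    Ts_inv_right K Hk i, Ts_inv_left K Hk i⟩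

lemma isUnit_T : ∀ w : W, IsUnit (Hk.T w) := by
  suffices h : ∀ (n : ℕ) (w : W), cs.length w = n → IsUnit (Hk.T w) by
    intro w; exact h _ w rfl
  intro n
  induction n with
  | zero =>
    intro w hw
    rw [cs.length_eq_zero_iff.mp hw, T_one]
    exact isUnit_one
  | succ n ih =>
    intro w hw
    have hw1 : w ≠ 1 := by
      intro h; rw [h, cs.length_one] at hw; exact Nat.succ_ne_zero n hw.symm
    obtain ⟨i, hi⟩ := cs.exists_leftDescent_of_ne_one hw1
    have hlen : cs.length (cs.simple i * w) + 1 = cs.length w := cs.isLeftDescent_iff.mp hi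
    set u := cs.simple i * w with hu
    have hsu : cs.simple i * u = w := by
      rw [hu, ← mul_assoc, cs.simple_mul_simple_self, one_mul]
    have hmul : Hk.T (cs.simple i) * Hk.T u = Hk.T w := by
      rw [Hk.T_mul _ _ (by rw [hsu, cs.length_simple]; omega), hsu]
    rw [← hmul]
    exact (isUnit_T_simple K Hk i).mul (ih u (by omega))

lemma inverse_mul_rev {A : Type*} [Ring A] {a b : A} (ha : IsUnit a) (hb : IsUnit b) :
    Ring.inverse (a * b) = Ring.inverse b * Ring.inverse a := by
  obtain ⟨u, rfl⟩ := ha; obtain ⟨v, rfl⟩ := hb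
  rw [← Units.val_mul, Ring.inverse_unit, Ring.inverse_unit, Ring.inverse_unit,
    mul_inv_rev, Units.val_mul]

/-- The underlying linear map of the involution `j`. -/
noncomputable def Jmap : Hk.carrier →ₗ[R] Hk.carrier :=
  Hk.basis.constr ℕ fun w => (-K.q) ^ cs.length w • Ring.inverse (Hk.T w⁻¹)

lemma Jmap_T (w : W) :
    Jmap K Hk (Hk.T w) = (-K.q) ^ cs.length w • Ring.inverse (Hk.T w⁻¹) := by
  rw [← Hk.basis_eq, Jmap, Module.Basis.constr_basis]

lemma Jmap_one : Jmap K Hk (1 : Hk.carrier) = 1 := by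
  rw [← T_one K Hk, Jmap_T]
  simp [T_one K Hk]

lemma Jmap_T_simple (i : B) :
    Jmap K Hk (Hk.T (cs.simple i)) = (K.q - 1) • 1 - Hk.T (cs.simple i) := by
  rw [Jmap_T, cs.inv_simple, cs.length_simple, pow_one, inverse_T_simple]
  match_scalars <;> linear_combination (-1 : R) * K.q_qinv

lemma JTs_sq (i : B) :
    Jmap K Hk (Hk.T (cs.simple i)) * Jmap K Hk (Hk.T (cs.simple i))
      = (K.q - 1) • Jmap K Hk (Hk.T (cs.simple i)) + K.q • 1 := by
  rw [Jmap_T_simple]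
  set t := Hk.T (cs.simple i) with ht
  have hsq := T_sq K Hk i
  rw [← ht] at hsq
  have expand : ((K.q - 1) • (1 : Hk.carrier) - t) * ((K.q - 1) • 1 - t)
      = (K.q - 1) • ((K.q - 1) • (1 : Hk.carrier)) - (K.q - 1) • t - (K.q - 1) • t + t * t := by
    simp only [sub_mul, mul_sub, smul_mul_assoc, mul_smul_comm, one_mul, mul_one]
    module
  rw [expand, hsq]
  module

lemma Jmap_simple_mul_T (i : B) (v : W) (h : ¬ cs.IsLeftDescent v i) :
    Jmap K Hk (Hk.T (cs.simple i) * Hk.T v)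
      = Jmap K Hk (Hk.T (cs.simple i)) * Jmap K Hk (Hk.T v) := by
  have hlen : cs.length (cs.simple i * v) = cs.length v + 1 := cs.not_isLeftDescent_iff.mp h
  rw [Hk.T_mul _ _ (by rw [hlen, cs.length_simple]; omega)]
  rw [Jmap_T, Jmap_T, Jmap_T]
  have hinv : (cs.simple i * v)⁻¹ = v⁻¹ * cs.simple i := by rw [mul_inv_rev, cs.inv_simple]
  have hinvlen : cs.length (v⁻¹ * cs.simple i)
      = cs.length v⁻¹ + cs.length (cs.simple i) := by
    rw [cs.length_simple, ← hinv, cs.length_inv, hlen, cs.length_inv]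
  have hTmul : Hk.T v⁻¹ * Hk.T (cs.simple i) = Hk.T (v⁻¹ * cs.simple i) :=
    Hk.T_mul _ _ hinvlen
  rw [hinv, ← hTmul, inverse_mul_rev (isUnit_T K Hk _) (isUnit_T K Hk _), cs.inv_simple,
    hlen, cs.length_simple, pow_one, smul_mul_assoc, mul_smul_comm, smul_smul, ← pow_succ']

lemma Jmap_simple_mul_T' (i : B) (v : W) :
    Jmap K Hk (Hk.T (cs.simple i) * Hk.T v)
      = Jmap K Hk (Hk.T (cs.simple i)) * Jmap K Hk (Hk.T v) := by
  by_cases h : cs.IsLeftDescent v i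
  · set v' := cs.simple i * v with hv'
    have hnd : ¬ cs.IsLeftDescent v' i := cs.isLeftDescent_iff_not_isLeftDescent_mul.mp h
    have hvv : cs.simple i * v' = v := by
      rw [hv', ← mul_assoc, cs.simple_mul_simple_self, one_mul]
    have hlen' : cs.length (cs.simple i * v') = cs.length v' + 1 :=
      cs.not_isLeftDescent_iff.mp hnd
    have hTv : Hk.T (cs.simple i) * Hk.T v' = Hk.T v := by
      rw [Hk.T_mul _ _ (by rw [cs.length_simple]; omega), hvv]
    have asc := Jmap_simple_mul_T K Hk i v' hnd
    calc Jmap K Hk (Hk.T (cs.simple i) * Hk.T v)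
        = Jmap K Hk ((Hk.T (cs.simple i) * Hk.T (cs.simple i)) * Hk.T v') := by
          rw [← hTv, mul_assoc]
      _ = Jmap K Hk ((K.q - 1) • (Hk.T (cs.simple i) * Hk.T v') + K.q • Hk.T v') := by
          rw [T_sq, add_mul, smul_mul_assoc, smul_mul_assoc, one_mul]
      _ = (K.q - 1) • Jmap K Hk (Hk.T (cs.simple i) * Hk.T v') + K.q • Jmap K Hk (Hk.T v') := by
          rw [map_add, map_smul, map_smul]
      _ = (K.q - 1) • (Jmap K Hk (Hk.T (cs.simple i)) * Jmap K Hk (Hk.T v'))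
            + K.q • Jmap K Hk (Hk.T v') := by rw [asc]
      _ = ((K.q - 1) • Jmap K Hk (Hk.T (cs.simple i)) + K.q • 1)
            * Jmap K Hk (Hk.T v') := by
          rw [add_mul, smul_mul_assoc, smul_mul_assoc, one_mul]
      _ = (Jmap K Hk (Hk.T (cs.simple i)) * Jmap K Hk (Hk.T (cs.simple i)))
            * Jmap K Hk (Hk.T v') := by rw [JTs_sq]
      _ = Jmap K Hk (Hk.T (cs.simple i)) * Jmap K Hk (Hk.T v) := by
          rw [mul_assoc, ← asc, hTv]
  · exact Jmap_simple_mul_T K Hk i v h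

lemma Jmap_simple_mul (i : B) (h : Hk.carrier) :
    Jmap K Hk (Hk.T (cs.simple i) * h)
      = Jmap K Hk (Hk.T (cs.simple i)) * Jmap K Hk h := by
  have key : (Jmap K Hk).comp (LinearMap.mulLeft R (Hk.T (cs.simple i)))
      = (LinearMap.mulLeft R (Jmap K Hk (Hk.T (cs.simple i)))).comp (Jmap K Hk) := by
    apply Hk.basis.ext; intro v
    simp only [LinearMap.comp_apply, LinearMap.mulLeft_apply, Hk.basis_eq]
    exact Jmap_simple_mul_T' K Hk i v
  exact LinearMap.congr_fun key h

lemma Jmap_T_mul (u : W) (h : Hk.carrier) :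
    Jmap K Hk (Hk.T u * h) = Jmap K Hk (Hk.T u) * Jmap K Hk h := by
  suffices key : ∀ (n : ℕ) (u : W), cs.length u = n →
      ∀ h : Hk.carrier, Jmap K Hk (Hk.T u * h) = Jmap K Hk (Hk.T u) * Jmap K Hk h by
    exact key _ u rfl h
  intro n
  induction n with
  | zero =>
    intro u hu h
    rw [cs.length_eq_zero_iff.mp hu, T_one, one_mul, Jmap_one, one_mul]
  | succ n ih =>
    intro u hu h
    have hu1 : u ≠ 1 := by
      intro hh; rw [hh, cs.length_one] at hu; exact Nat.succ_ne_zero n hu.symm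
    obtain ⟨i, hi⟩ := cs.exists_leftDescent_of_ne_one hu1
    have hlen : cs.length (cs.simple i * u) + 1 = cs.length u := cs.isLeftDescent_iff.mp hi
    set u' := cs.simple i * u with hu'
    have hsu : cs.simple i * u' = u := by
      rw [hu', ← mul_assoc, cs.simple_mul_simple_self, one_mul]
    have hmul : Hk.T (cs.simple i) * Hk.T u' = Hk.T u := by
      rw [Hk.T_mul _ _ (by rw [hsu, cs.length_simple]; omega), hsu]
    have hlu' : cs.length u' = n := by omega
    rw [← hmul, mul_assoc, Jmap_simple_mul, ih u' hlu' h, Jmap_simple_mul, mul_assoc]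

lemma Jmap_mul (x y : Hk.carrier) :
    Jmap K Hk (x * y) = Jmap K Hk x * Jmap K Hk y := by
  have key : (Jmap K Hk).comp (LinearMap.mulRight R y)
      = (LinearMap.mulRight R (Jmap K Hk y)).comp (Jmap K Hk) := by
    apply Hk.basis.ext; intro u
    simp only [LinearMap.comp_apply, LinearMap.mulRight_apply, Hk.basis_eq]
    exact Jmap_T_mul K Hk u y
  exact LinearMap.congr_fun key x

/-- The involution `j` as an algebra homomorphism. -/
noncomputable def jHom : Hk.carrier →ₐ[R] Hk.carrier :=
  AlgHom.ofLinearMap (Jmap K Hk) (Jmap_one K Hk) (Jmap_mul K Hk)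

lemma jHom_apply (x : Hk.carrier) : jHom K Hk x = Jmap K Hk x := rfl

lemma Jmap_inverse_T (w : W) :
    Jmap K Hk (Ring.inverse (Hk.T w)) = (-K.qinv) ^ cs.length w • Hk.T w⁻¹ := by
  have hu := isUnit_T K Hk w
  have h1 : Jmap K Hk (Ring.inverse (Hk.T w)) * Jmap K Hk (Hk.T w) = 1 := by
    rw [← Jmap_mul, Ring.inverse_mul_cancel _ hu, Jmap_one]
  have h2 : Jmap K Hk (Hk.T w) * ((-K.qinv) ^ cs.length w • Hk.T w⁻¹) = 1 := by
    rw [Jmap_T, smul_mul_assoc, mul_smul_comm, smul_smul, ← mul_pow,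
      Ring.inverse_mul_cancel _ (isUnit_T K Hk w⁻¹)]
    have : -K.q * -K.qinv = 1 := by linear_combination K.q_qinv
    rw [this, one_pow, one_smul]
  calc Jmap K Hk (Ring.inverse (Hk.T w))
      = Jmap K Hk (Ring.inverse (Hk.T w))
          * (Jmap K Hk (Hk.T w) * ((-K.qinv) ^ cs.length w • Hk.T w⁻¹)) := by
        rw [h2, mul_one]
    _ = (-K.qinv) ^ cs.length w • Hk.T w⁻¹ := by rw [← mul_assoc, h1, one_mul]

lemma Jmap_Jmap_T (w : W) : Jmap K Hk (Jmap K Hk (Hk.T w)) = Hk.T w := by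
  rw [Jmap_T, map_smul, Jmap_inverse_T, cs.length_inv, inv_inv, smul_smul, ← mul_pow]
  have : -K.q * -K.qinv = 1 := by linear_combination K.q_qinv
  rw [this, one_pow, one_smul]

end JConstruction

/-- The assignment `j(Σ r_w T_w) = Σ r_w (-q)^{ℓ(w)} (T_{w⁻¹})⁻¹` is a
well-defined involutive endomorphism of the Hecke algebra `H` regarded as an `R`-algebra
(`R`-linear, multiplicative, and `j ∘ j = id`). -/
theorem statement1 (K : KLRing R) (Hk : Hecke cs R K.q) :
    ∃ j : Hk.carrier →ₐ[R] Hk.carrier,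
      IsJ K Hk j ∧
      (∀ h : Hk.carrier, j (j h) = h) ∧
      ∀ j' : Hk.carrier →ₐ[R] Hk.carrier, IsJ K Hk j' → j' = j := by
  refine ⟨jHom K Hk, ?_, ?_, ?_⟩
  · intro w
    rw [jHom_apply, Jmap_T]
  · intro h
    have key : (jHom K Hk).toLinearMap.comp (jHom K Hk).toLinearMap = LinearMap.id := by
      apply Hk.basis.ext; intro w
      simp only [LinearMap.comp_apply, AlgHom.toLinearMap_apply, LinearMap.id_apply,
        Hk.basis_eq]
      rw [jHom_apply, jHom_apply]
      exact Jmap_Jmap_T K Hk w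
    have := LinearMap.congr_fun key h
    simpa using this
  · intro j' hj'
    apply AlgHom.toLinearMap_injective
    apply Hk.basis.ext; intro w
    simp only [AlgHom.toLinearMap_apply, Hk.basis_eq]
    rw [hj' w, jHom_apply, Jmap_T]

end KLPaper
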